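/- Let G be a finite simple graph admitting a join into parts V1 and V2 with both |V1| and |V2| odd. Then there exists a set A ⊆ V(G) such that both A and V(G) \ A are odd sets; i.e., V(G) can be partitioned into two (possibly empty) odd sets. -/

import Mathlib

open Finset in
lemma dual_solve {n : Type*} [Fintype n] [DecidableEq n] {K : Type*} [Field K]
    (M : Matrix n n K) (b : n → K)
    (h : ∀ y, M.transpose.mulVec y = 0 → dotProduct b y = 0) :
    ∃ x, M.mulVec x = b := by
  by_contra hc
  push_neg at hc
  have hb : b ∉ LinearMap.range M.mulVecLin := by
    rintro ⟨x, hx⟩; exact hc x hx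
  -- separate by a dual functional on the quotient
  set W := LinearMap.range M.mulVecLin
  have hq : W.mkQ b ≠ 0 := by
    simpa [Submodule.Quotient.mk_eq_zero] using hb
  
  have hq2 : ∃ φ' : Module.Dual K ((n → K) ⧸ W), φ' (W.mkQ b) ≠ 0 := by
    by_contra hall; push_neg at hall
    exact hq ((Module.forall_dual_apply_eq_zero_iff K _).mp hall)
  obtain ⟨φ', hφ'⟩ := hq2
  set φ : Module.Dual K (n → K) := φ'.comp W.mkQ with hφdef
  have hφW : ∀ w ∈ W, φ w = 0 := by
    intro w hw
    simp [hφdef, (Submodule.Quotient.mk_eq_zero W).mpr hw]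
  set y : n → K := fun i => φ (Pi.single i 1) with hy
  have hrep : ∀ v : n → K, φ v = dotProduct v y := by
    intro v
    have : v = ∑ i, v i • (Pi.single i 1 : n → K) := by
      ext j; simp [Pi.single_apply]
    rw [this, map_sum]
    simp [dotProduct, hy, Finset.sum_apply, Pi.single_apply, mul_comm]
  have hker : M.transpose.mulVec y = 0 := by
    ext j
    have := hφW (M.mulVec (Pi.single j (1:K))) ⟨_, rfl⟩
    rw [hrep, Matrix.mulVec_single_one] at this
    simpa [Matrix.mulVec, dotProduct, Matrix.transpose, mul_comm] using this
  have := h y hker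
  rw [← hrep] at this
  exact hφ' this

open Finset Matrix

-- cast of ncard as a sum of indicators
lemma ncard_cast_sum {V : Type*} [Fintype V] (S : Set V) [DecidablePred (· ∈ S)] :
    ((S.ncard : ZMod 2)) = ∑ v : V, if v ∈ S then (1 : ZMod 2) else 0 := by
  rw [Finset.sum_boole]
  congr 1
  rw [Set.ncard_eq_toFinset_card']
  congr 1
  ext v
  simp

-- quadratic form of a symmetric zero-diagonal matrix over ZMod 2 vanishes
lemma quad_zero {V : Type*} [Fintype V] [DecidableEq V] (A : Matrix V V (ZMod 2))
    (hsymm : ∀ u v, A u v = A v u) (hdiag : ∀ v, A v v = 0) (y : V → ZMod 2) :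
    y ⬝ᵥ (A *ᵥ y) = 0 := by
  have : y ⬝ᵥ (A *ᵥ y) = ∑ p ∈ Finset.univ ×ˢ Finset.univ,
      y p.1 * A p.1 p.2 * y p.2 := by
    rw [Finset.sum_product]
    simp [dotProduct, Matrix.mulVec, Finset.mul_sum, mul_assoc]
  rw [this]
  apply Finset.sum_involution (fun p _ => (p.2, p.1))
  · intro p _
    have : A p.1 p.2 = A p.2 p.1 := hsymm _ _
    rw [this]; ring_nf
    rw [show (2 : ZMod 2) = 0 by decide, mul_zero]
  · intro p _ hne
    intro hc
    have : p.2 = p.1 := congrArg Prod.fst hc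
    rw [this, hdiag] at hne
    simp at hne
  · intro p hp; simp
  · intro p _; rfl

lemma gallai_odd_even {V : Type*} [Fintype V] [DecidableEq V] (G : SimpleGraph V)
    [DecidableRel G.Adj] (U : Set V) [DecidablePred (· ∈ U)] :
    ∃ X : Set V, X ⊆ U ∧ Even X.ncard ∧
      (∀ v ∈ X, Odd ((X ∩ G.neighborSet v)).ncard) ∧
      (∀ v ∈ U \ X, Even (((U \ X) ∩ G.neighborSet v)).ncard) := by
  set A : Matrix V V (ZMod 2) :=
    Matrix.of (fun u v => if u ∈ U ∧ v ∈ U ∧ G.Adj u v then 1 else 0) with hA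
  set d : V → ZMod 2 := A.mulVec 1 with hd
  set M : Matrix V V (ZMod 2) := A + Matrix.diagonal d + 1 with hMdef
  have two_eq : (2 : ZMod 2) = 0 := by decide
  have hx01 : ∀ a : ZMod 2, a = 0 ∨ a = 1 := by decide
  have hAsymm : ∀ u v, A u v = A v u := by
    intro u v
    simp only [hA, Matrix.of_apply]
    apply if_congr _ rfl rfl
    constructor
    · rintro ⟨h1, h2, h3⟩; exact ⟨h2, h1, h3.symm⟩
    · rintro ⟨h1, h2, h3⟩; exact ⟨h2, h1, h3.symm⟩
  have hdiagA : ∀ v, A v v = 0 := by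
    intro v; simp [hA]
  have hAT : A.transpose = A := by
    ext u v; exact hAsymm v u
  have hMT : M.transpose = M := by
    rw [hMdef, Matrix.transpose_add, Matrix.transpose_add, hAT,
      Matrix.diagonal_transpose, Matrix.transpose_one]
  have hM : ∀ (z : V → ZMod 2) (v : V),
      (M *ᵥ z) v = (A *ᵥ z) v + d v * z v + z v := by
    intro z v
    rw [hMdef]
    simp [Matrix.add_mulVec, Matrix.mulVec_diagonal, Matrix.one_mulVec]
  obtain ⟨x, hx⟩ : ∃ x, M *ᵥ x = d := by
    apply dual_solve
    intro y hy
    rw [hMT] at hy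
    have hAy : ∀ v, (A *ᵥ y) v = d v * y v + y v := by
      intro v
      have h0 : (M *ᵥ y) v = 0 := by rw [hy]; rfl
      rw [hM y v] at h0
      linear_combination h0 - (d v * y v + y v) * two_eq
    have hsum_d : d ⬝ᵥ y = (fun _ => (1 : ZMod 2)) ⬝ᵥ (A *ᵥ y) := by
      rw [Matrix.dotProduct_mulVec, ← hAT, Matrix.vecMul_transpose]
      simp only [dotProduct, hd]
      rfl
    have h1Ay : (fun _ => (1 : ZMod 2)) ⬝ᵥ (A *ᵥ y) = d ⬝ᵥ y + ∑ v, y v := by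
      simp only [dotProduct, hAy, one_mul]
      rw [← Finset.sum_add_distrib]
    have hsy : ∑ v, y v = 0 := by
      have := hsum_d.trans h1Ay
      exact (left_eq_add.mp this)
    have hq := quad_zero A hAsymm hdiagA y
    have hq2 : y ⬝ᵥ (A *ᵥ y) = d ⬝ᵥ y + ∑ v, y v := by
      simp only [dotProduct, hAy]
      rw [← Finset.sum_add_distrib]
      apply Finset.sum_congr rfl
      intro v _
      rcases hx01 (y v) with h | h <;> rw [h] <;> ring
    rw [hq, hsy, add_zero] at hq2
    exact hq2.symm
  -- X is the support of x
  set X : Set V := {v | x v = 1} with hX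
  have hxind : ∀ u, x u = if u ∈ X then 1 else 0 := by
    intro u
    by_cases h : u ∈ X
    · simp only [if_pos h]; exact h
    · simp only [if_neg h]
      rcases hx01 (x u) with h' | h'
      · exact h'
      · exact absurd h' h
  have hXU : X ⊆ U := by
    intro v hv
    by_contra hvU
    have hrow : ∀ u, A v u = 0 := by
      intro u; simp [hA, hvU]
    have hdv : d v = 0 := by
      simp [hd, Matrix.mulVec, dotProduct, hrow]
    have h0 : (M *ᵥ x) v = d v := by rw [hx]
    rw [hM x v, hdv] at h0
    have hAxv : (A *ᵥ x) v = 0 := by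
      simp [Matrix.mulVec, dotProduct, hrow]
    rw [hAxv] at h0
    simp only [mul_zero, zero_mul, zero_add, add_zero] at h0
    exact one_ne_zero (hv ▸ h0 : (1 : ZMod 2) = 0)
  -- counting: (A *ᵥ x) v is the parity of |X ∩ N(v)| for v ∈ U
  have hAx : ∀ v ∈ U, (A *ᵥ x) v = (((X ∩ G.neighborSet v)).ncard : ZMod 2) := by
    intro v hv
    rw [ncard_cast_sum]
    simp only [Matrix.mulVec, dotProduct, hA, Matrix.of_apply]
    apply Finset.sum_congr rfl
    intro u _
    by_cases hXu : u ∈ X <;> by_cases hadj : G.Adj v u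
    · have hxu : x u = 1 := hXu
      simp [hXu, hadj, hv, hXU hXu, SimpleGraph.mem_neighborSet, hxu]
    · have hxu : x u = 1 := hXu
      simp [hXu, hadj, SimpleGraph.mem_neighborSet]
    · have hxu : x u = 0 := by
        rcases hx01 (x u) with h | h
        · exact h
        · exact absurd h hXu
      simp [hXu, hadj, SimpleGraph.mem_neighborSet, hxu]
    · have hxu : x u = 0 := by
        rcases hx01 (x u) with h | h
        · exact h
        · exact absurd h hXu
      simp [hXu, hadj, SimpleGraph.mem_neighborSet, hxu]
  have hdUc : ∀ v ∈ U, d v = (((U ∩ G.neighborSet v)).ncard : ZMod 2) := by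
    intro v hv
    rw [ncard_cast_sum]
    simp only [hd, Matrix.mulVec, dotProduct, hA, Matrix.of_apply]
    apply Finset.sum_congr rfl
    intro u _
    by_cases hUu : u ∈ U <;> by_cases hadj : G.Adj v u <;>
      simp [hUu, hadj, hv, SimpleGraph.mem_neighborSet]
  -- |X| is even
  have hXeven : Even X.ncard := by
    rw [← ZMod.natCast_eq_zero_iff_even, ncard_cast_sum]
    have e1 : (fun _ => (1 : ZMod 2)) ⬝ᵥ (M *ᵥ x) = (fun _ => (1 : ZMod 2)) ⬝ᵥ d := by
      rw [hx]
    have hM1 : ∀ v, (M *ᵥ (fun _ => (1 : ZMod 2))) v = 1 := by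
      intro v
      rw [hM]
      have : (A *ᵥ (fun _ => (1 : ZMod 2))) v = d v := rfl
      rw [this]
      linear_combination (d v) * two_eq
    have e2 : (fun _ => (1 : ZMod 2)) ⬝ᵥ (M *ᵥ x) = ∑ v, x v := by
      rw [Matrix.dotProduct_mulVec, ← hMT, Matrix.vecMul_transpose]
      simp only [dotProduct]
      apply Finset.sum_congr rfl
      intro v _
      rw [hM1 v, one_mul]
    have e3 : (fun _ => (1 : ZMod 2)) ⬝ᵥ d = 0 := by
      have hq := quad_zero A hAsymm hdiagA (fun _ => (1 : ZMod 2))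
      have : (fun _ => (1 : ZMod 2)) ⬝ᵥ d = (fun _ => (1 : ZMod 2)) ⬝ᵥ (A *ᵥ (fun _ => (1 : ZMod 2))) := by
        simp only [dotProduct, hd]
        rfl
      rw [this]
      convert hq using 2
    have e5 : ∑ v, x v = 0 := by rw [← e2, e1, e3]
    have e4 : ∑ v, (if v ∈ X then (1 : ZMod 2) else 0) = ∑ v, x v :=
      Finset.sum_congr rfl fun v _ => (hxind v).symm
    rw [e4, e5]
  refine ⟨X, hXU, hXeven, ?_, ?_⟩
  · intro v hv
    rw [← ZMod.natCast_eq_one_iff_odd, ← hAx v (hXU hv)]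
    have h0 : (M *ᵥ x) v = d v := by rw [hx]
    rw [hM x v] at h0
    have hxv : x v = 1 := hv
    rw [hxv] at h0
    linear_combination h0 - two_eq
  · intro v hv
    obtain ⟨hvU, hvX⟩ := hv
    have hxv : x v = 0 := by
      rcases hx01 (x v) with h | h
      · exact h
      · exact absurd h hvX
    have h0 : (M *ᵥ x) v = d v := by rw [hx]
    rw [hM x v, hxv, mul_zero, add_zero, add_zero] at h0
    -- so cast |X ∩ N v| = cast |U ∩ N v|
    rw [hAx v hvU, hdUc v hvU] at h0
    have hsub : X ∩ G.neighborSet v ⊆ U ∩ G.neighborSet v :=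
      Set.inter_subset_inter_left _ hXU
    have hsplit : (U \ X) ∩ G.neighborSet v
        = (U ∩ G.neighborSet v) \ (X ∩ G.neighborSet v) := by
      ext u
      simp only [Set.mem_inter_iff, Set.mem_diff, SimpleGraph.mem_neighborSet]
      tauto
    rw [← ZMod.natCast_eq_zero_iff_even, hsplit, Set.ncard_diff hsub,
      Nat.cast_sub (Set.ncard_le_ncard hsub (Set.toFinite _)), h0, sub_self]

/-- A set `S` of vertices of `G` is *odd* if every vertex of `S` has an odd number of
neighbors inside `S`. -/
def SimpleGraph.IsOddSet {V : Type*} (G : SimpleGraph V) (S : Set V) : Prop :=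
  ∀ v ∈ S, Odd (S ∩ G.neighborSet v).ncard

/-- If a finite graph `G` admits a join into two parts of odd size, then its vertex set can
be partitioned into two (possibly empty) odd sets. -/
theorem stmt1 {V : Type*} [Fintype V] (G : SimpleGraph V)
    (V1 V2 : Set V) (h1 : V1.Nonempty) (h2 : V2.Nonempty)
    (hdisj : Disjoint V1 V2) (hcover : V1 ∪ V2 = Set.univ)
    (hjoin : ∀ u ∈ V1, ∀ w ∈ V2, G.Adj u w)
    (hodd1 : Odd V1.ncard) (hodd2 : Odd V2.ncard) :
    ∃ A : Set V, G.IsOddSet A ∧ G.IsOddSet Aᶜ := by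
  classical
  obtain ⟨X, hXV1, hXeven, hXodd, hXcompl⟩ := gallai_odd_even G V1
  obtain ⟨Y, hYV2, hYeven, hYodd, hYcompl⟩ := gallai_odd_even G V2
  have hd12 : ∀ v ∈ V1, v ∉ V2 := fun v hv => Set.disjoint_left.mp hdisj hv
  have hd21 : ∀ v ∈ V2, v ∉ V1 := fun v hv => Set.disjoint_right.mp hdisj hv
  refine ⟨X ∪ Y, ?_, ?_⟩
  · -- X ∪ Y is an odd set
    intro v hv
    rcases hv with hvX | hvY
    · -- v ∈ X ⊆ V1 : neighbors in X ∪ Y are (X ∩ N v) ∪ Y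
      have hsplit : (X ∪ Y) ∩ G.neighborSet v = (X ∩ G.neighborSet v) ∪ Y := by
        ext u
        simp only [Set.mem_inter_iff, Set.mem_union, SimpleGraph.mem_neighborSet]
        constructor
        · rintro ⟨hu | hu, hadj⟩
          · exact Or.inl ⟨hu, hadj⟩
          · exact Or.inr hu
        · rintro (⟨hu, hadj⟩ | hu)
          · exact ⟨Or.inl hu, hadj⟩
          · exact ⟨Or.inr hu, hjoin v (hXV1 hvX) u (hYV2 hu)⟩
      have hdXY : Disjoint (X ∩ G.neighborSet v) Y :=
        Set.disjoint_of_subset ((Set.inter_subset_left).trans hXV1) hYV2 hdisj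
      rw [hsplit, Set.ncard_union_eq hdXY (Set.toFinite _) (Set.toFinite _)]
      exact (hXodd v hvX).add_even hYeven
    · have hsplit : (X ∪ Y) ∩ G.neighborSet v = X ∪ (Y ∩ G.neighborSet v) := by
        ext u
        simp only [Set.mem_inter_iff, Set.mem_union, SimpleGraph.mem_neighborSet]
        constructor
        · rintro ⟨hu | hu, hadj⟩
          · exact Or.inl hu
          · exact Or.inr ⟨hu, hadj⟩
        · rintro (hu | ⟨hu, hadj⟩)
          · exact ⟨Or.inl hu, (hjoin u (hXV1 hu) v (hYV2 hvY)).symm⟩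
          · exact ⟨Or.inr hu, hadj⟩
      have hdXY : Disjoint X (Y ∩ G.neighborSet v) :=
        Set.disjoint_of_subset hXV1 ((Set.inter_subset_left).trans hYV2) hdisj
      rw [hsplit, Set.ncard_union_eq hdXY (Set.toFinite _) (Set.toFinite _)]
      exact hXeven.add_odd (hYodd v hvY)
  · -- the complement (V1 \ X) ∪ (V2 \ Y) is an odd set
    have hcompl : (X ∪ Y)ᶜ = (V1 \ X) ∪ (V2 \ Y) := by
      ext u
      have hu12 : u ∈ V1 ∨ u ∈ V2 := by
        have : u ∈ V1 ∪ V2 := hcover ▸ Set.mem_univ u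
        exact this
      simp only [Set.mem_compl_iff, Set.mem_union, Set.mem_diff]
      constructor
      · intro h
        push_neg at h
        rcases hu12 with h1' | h2'
        · exact Or.inl ⟨h1', h.1⟩
        · exact Or.inr ⟨h2', h.2⟩
      · rintro (⟨hu, hnX⟩ | ⟨hu, hnY⟩) h
        · rcases h with h | h
          · exact hnX h
          · exact hd12 u hu (hYV2 h)
        · rcases h with h | h
          · exact hd21 u hu (hXV1 h)
          · exact hnY h
    rw [hcompl]
    have hV2Yodd : Odd (V2 \ Y).ncard := by
      rw [Set.ncard_diff hYV2 (Set.toFinite _)]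
      exact Nat.Odd.sub_even (Set.ncard_le_ncard hYV2 (Set.toFinite _)) hodd2 hYeven
    have hV1Xodd : Odd (V1 \ X).ncard := by
      rw [Set.ncard_diff hXV1 (Set.toFinite _)]
      exact Nat.Odd.sub_even (Set.ncard_le_ncard hXV1 (Set.toFinite _)) hodd1 hXeven
    intro v hv
    rcases hv with hvX | hvY
    · have hvV1 : v ∈ V1 := hvX.1
      have hsplit : ((V1 \ X) ∪ (V2 \ Y)) ∩ G.neighborSet v
          = ((V1 \ X) ∩ G.neighborSet v) ∪ (V2 \ Y) := by
        ext u
        simp only [Set.mem_inter_iff, Set.mem_union, SimpleGraph.mem_neighborSet]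
        constructor
        · rintro ⟨hu | hu, hadj⟩
          · exact Or.inl ⟨hu, hadj⟩
          · exact Or.inr hu
        · rintro (⟨hu, hadj⟩ | hu)
          · exact ⟨Or.inl hu, hadj⟩
          · exact ⟨Or.inr hu, hjoin v hvV1 u hu.1⟩
      have hdd : Disjoint ((V1 \ X) ∩ G.neighborSet v) (V2 \ Y) :=
        Set.disjoint_of_subset ((Set.inter_subset_left).trans Set.diff_subset)
          Set.diff_subset hdisj
      rw [hsplit, Set.ncard_union_eq hdd (Set.toFinite _) (Set.toFinite _)]
      exact (hXcompl v hvX).add_odd hV2Yodd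
    · have hvV2 : v ∈ V2 := hvY.1
      have hsplit : ((V1 \ X) ∪ (V2 \ Y)) ∩ G.neighborSet v
          = (V1 \ X) ∪ ((V2 \ Y) ∩ G.neighborSet v) := by
        ext u
        simp only [Set.mem_inter_iff, Set.mem_union, SimpleGraph.mem_neighborSet]
        constructor
        · rintro ⟨hu | hu, hadj⟩
          · exact Or.inl hu
          · exact Or.inr ⟨hu, hadj⟩
        · rintro (hu | ⟨hu, hadj⟩)
          · exact ⟨Or.inl hu, (hjoin u hu.1 v hvV2).symm⟩
          · exact ⟨Or.inr hu, hadj⟩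
      have hdd : Disjoint (V1 \ X) ((V2 \ Y) ∩ G.neighborSet v) :=
        Set.disjoint_of_subset Set.diff_subset
          ((Set.inter_subset_left).trans Set.diff_subset) hdisj
      rw [hsplit, Set.ncard_union_eq hdd (Set.toFinite _) (Set.toFinite _)]
      exact hV1Xodd.add_even (hYcompl v hvY)
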